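/- Let k ≥ 3, c₀ = (k-2)/2, and for c > c₀ let A_k(c) be the unique positive solution of A = c·f_k(A), where f_k(B) = 2B·∫_B^∞ ψ_{k-1}(x)·x^{-2} dx. Then, as ε → 0⁺ with c = (1+ε)·c₀, A_k(c) → 0 and A_k(c) ~ ((k-1)!·ε)^{1/(k-2)}. -/

import Mathlib

open MeasureTheory Filter

/-- `psi m x` is the probability that a Poisson random variable with mean `x`
takes a value at least `m`. -/
noncomputable def psi (m : ℕ) (x : ℝ) : ℝ :=
  ∑' t : ℕ, if m ≤ t then x ^ t * Real.exp (-x) / t.factorial else 0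

/-- `fk k B = 2 B ∫_B^∞ ψ_{k-1}(x) x⁻² dx`. -/
noncomputable def fk (k : ℕ) (B : ℝ) : ℝ :=
  2 * B * ∫ x in Set.Ioi B, psi (k - 1) x / x ^ 2

lemma summable_g (x : ℝ) : Summable (fun t : ℕ => x ^ t * Real.exp (-x) / t.factorial) := by
  have h := Real.summable_pow_div_factorial x
  simpa [div_mul_eq_mul_div, mul_comm, mul_div_assoc] using h.mul_right (Real.exp (-x))

lemma summable_h (m : ℕ) (x : ℝ) :
    Summable (fun t : ℕ => if m ≤ t then x ^ t * Real.exp (-x) / t.factorial else 0) := by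
  have := (summable_g x).indicator {t | m ≤ t}
  refine this.congr fun t => ?_
  simp [Set.indicator_apply, Set.mem_setOf_eq]

lemma tsum_g (x : ℝ) : ∑' t : ℕ, x ^ t * Real.exp (-x) / t.factorial = 1 := by
  have h : ∑' t : ℕ, x ^ t / t.factorial = Real.exp x := by
    rw [Real.exp_eq_exp_ℝ, NormedSpace.exp_eq_tsum_div]
  calc ∑' t : ℕ, x ^ t * Real.exp (-x) / t.factorial
      = (∑' t : ℕ, x ^ t / t.factorial) * Real.exp (-x) := by
        rw [← tsum_mul_right]; congr 1; ext t; ring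
    _ = 1 := by rw [h, ← Real.exp_add]; simp

lemma psi_eq (m : ℕ) (x : ℝ) :
    psi m x = 1 - Real.exp (-x) * ∑ t ∈ Finset.range m, x ^ t / t.factorial := by
  set g : ℕ → ℝ := fun t => x ^ t * Real.exp (-x) / t.factorial with hg
  have hgs : Summable g := summable_g x
  have h1 : (∑ i ∈ Finset.range m, g i) + ∑' i : ℕ, g (i + m) = ∑' i, g i :=
    Summable.sum_add_tsum_nat_add m hgs
  have h2 : psi m x = ∑' i : ℕ, g (i + m) := by
    have hh : Summable (fun t : ℕ => if m ≤ t then g t else 0) := summable_h m x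
    have h3 : (∑ i ∈ Finset.range m, if m ≤ i then g i else 0)
        + ∑' i : ℕ, (if m ≤ i + m then g (i + m) else 0)
        = ∑' i, (if m ≤ i then g i else 0) := Summable.sum_add_tsum_nat_add m hh
    have h4 : (∑ i ∈ Finset.range m, if m ≤ i then g i else 0) = 0 := by
      apply Finset.sum_eq_zero; intro i hi
      simp [Nat.not_le.mpr (Finset.mem_range.mp hi)]
    have h5 : ∀ i : ℕ, (if m ≤ i + m then g (i + m) else 0) = g (i + m) := by
      intro i; simp [Nat.le_add_left]
    rw [h4, zero_add] at h3
    rw [psi, ← h3]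
    exact tsum_congr fun i => h5 i
  have h6 : ∑' i, g i = 1 := by
    have h : ∑' t : ℕ, x ^ t / t.factorial = Real.exp x := by
      rw [Real.exp_eq_exp_ℝ, NormedSpace.exp_eq_tsum_div]
    calc ∑' t : ℕ, x ^ t * Real.exp (-x) / t.factorial
        = (∑' t : ℕ, x ^ t / t.factorial) * Real.exp (-x) := by
          rw [← tsum_mul_right]; congr 1; ext t; ring
      _ = 1 := by rw [h, ← Real.exp_add]; simp
    
  have h7 : (∑ i ∈ Finset.range m, g i) = Real.exp (-x) * ∑ t ∈ Finset.range m, x ^ t / t.factorial := by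
    rw [Finset.mul_sum]; apply Finset.sum_congr rfl; intro i _; rw [hg]; ring
  rw [h2, ← h6, ← h1, h7]; ring

lemma psi_continuous (m : ℕ) : Continuous (psi m) := by
  have : psi m = fun x => 1 - Real.exp (-x) * ∑ t ∈ Finset.range m, x ^ t / t.factorial :=
    funext (psi_eq m)
  rw [this]; fun_prop

lemma psi_nonneg (m : ℕ) {x : ℝ} (hx : 0 ≤ x) : 0 ≤ psi m x := by
  refine tsum_nonneg fun t => ?_
  split <;> positivity

lemma psi_le_one (m : ℕ) {x : ℝ} (hx : 0 ≤ x) : psi m x ≤ 1 := by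
  rw [psi_eq]
  have : 0 ≤ Real.exp (-x) * ∑ t ∈ Finset.range m, x ^ t / t.factorial := by
    have : 0 ≤ ∑ t ∈ Finset.range m, x ^ t / t.factorial :=
      Finset.sum_nonneg fun t _ => by positivity
    positivity
  linarith

lemma psi_lower (m : ℕ) {x : ℝ} (hx : 0 ≤ x) :
    x ^ m * Real.exp (-x) / m.factorial ≤ psi m x := by
  have h := Summable.le_tsum (summable_h m x) m (fun j _ => by split <;> positivity)
  simpa [psi] using h

lemma psi_eq_shift (m : ℕ) (x : ℝ) :
    psi m x = ∑' i : ℕ, x ^ (i + m) * Real.exp (-x) / (i + m).factorial := by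
  set g : ℕ → ℝ := fun t => x ^ t * Real.exp (-x) / t.factorial with hg
  have hh : Summable (fun t : ℕ => if m ≤ t then g t else 0) := summable_h m x
  have h3 : (∑ i ∈ Finset.range m, if m ≤ i then g i else 0)
      + ∑' i : ℕ, (if m ≤ i + m then g (i + m) else 0)
      = ∑' i, (if m ≤ i then g i else 0) := Summable.sum_add_tsum_nat_add m hh
  have h4 : (∑ i ∈ Finset.range m, if m ≤ i then g i else 0) = 0 := by
    apply Finset.sum_eq_zero; intro i hi
    simp [Nat.not_le.mpr (Finset.mem_range.mp hi)]
  have h5 : ∀ i : ℕ, (if m ≤ i + m then g (i + m) else 0) = g (i + m) := by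
    intro i; simp [Nat.le_add_left]
  rw [h4, zero_add] at h3
  rw [psi, ← h3]
  exact tsum_congr fun i => h5 i

lemma psi_upper (m : ℕ) {x : ℝ} (hx : 0 ≤ x) : psi m x ≤ x ^ m / m.factorial := by
  rw [psi_eq_shift]
  have hsum2 : Summable (fun i : ℕ => x ^ m / m.factorial * (x ^ i * Real.exp (-x) / i.factorial)) :=
    (summable_g x).mul_left _
  have hsum1 : Summable (fun i : ℕ => x ^ (i + m) * Real.exp (-x) / (i + m).factorial) := by
    have := (summable_g x).comp_injective (add_right_injective m)
    simpa [Function.comp_def, add_comm] using this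
  calc ∑' i : ℕ, x ^ (i + m) * Real.exp (-x) / (i + m).factorial
      ≤ ∑' i : ℕ, x ^ m / m.factorial * (x ^ i * Real.exp (-x) / i.factorial) := by
        refine Summable.tsum_le_tsum (fun i => ?_) hsum1 hsum2
        have hfact : (m.factorial * i.factorial : ℝ) ≤ (i + m).factorial := by
          have := Nat.factorial_mul_factorial_dvd_factorial_add m i
          exact_mod_cast Nat.le_of_dvd (i + m).factorial_pos (by simpa [add_comm] using this)
        have hnum : (0:ℝ) ≤ x ^ (i + m) * Real.exp (-x) := by positivity
        have h1 : x ^ (i + m) * Real.exp (-x) / (i + m).factorial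
            ≤ x ^ (i + m) * Real.exp (-x) / (m.factorial * i.factorial : ℝ) := by
          apply div_le_div_of_nonneg_left hnum
          · positivity
          · exact hfact
        refine h1.trans (le_of_eq ?_)
        rw [pow_add]
        ring
    _ = x ^ m / m.factorial := by
        rw [tsum_mul_left, tsum_g, mul_one]

lemma hasDerivAt_S (m : ℕ) (x : ℝ) :
    HasDerivAt (fun y : ℝ => ∑ t ∈ Finset.range (m + 1), y ^ t / t.factorial)
      (∑ t ∈ Finset.range m, x ^ t / t.factorial) x := by
  induction m with
  | zero => simpa using (hasDerivAt_const x (1:ℝ))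
  | succ n ih =>
      have h2 : HasDerivAt (fun y : ℝ => y ^ (n + 1) / (n + 1).factorial)
          (x ^ n / n.factorial) x := by
        have := (hasDerivAt_pow (n + 1) x).div_const ((n + 1).factorial : ℝ)
        refine this.congr_deriv ?_
        rw [Nat.factorial_succ]
        push_cast
        field_simp
      have := ih.add h2
      refine HasDerivAt.congr_deriv (this.congr_of_eventuallyEq ?_) ?_
      · filter_upwards with y
        simp only [Pi.add_apply]
        rw [Finset.sum_range_succ]
      · rw [Finset.sum_range_succ]

lemma hasDerivAt_psi (m : ℕ) (hm : 1 ≤ m) (x : ℝ) :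
    HasDerivAt (psi m) (x ^ (m - 1) * Real.exp (-x) / (m - 1).factorial) x := by
  obtain ⟨n, rfl⟩ : ∃ n, m = n + 1 := ⟨m - 1, (Nat.succ_pred_eq_of_pos hm).symm⟩
  have hexp : HasDerivAt (fun y : ℝ => Real.exp (-y)) (-Real.exp (-x)) x := by
    simpa [Function.comp_def] using (Real.hasDerivAt_exp (-x)).comp x (hasDerivAt_neg x)
  have hprod := hexp.mul (hasDerivAt_S n x)
  have hfull := (hasDerivAt_const x (1:ℝ)).sub hprod
  have heq : psi (n + 1) = fun y => 1 - Real.exp (-y) * ∑ t ∈ Finset.range (n+1), y ^ t / t.factorial :=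
    funext (psi_eq (n + 1))
  rw [heq]
  refine HasDerivAt.congr_deriv hfull ?_
  rw [Finset.sum_range_succ]
  simp only [Nat.add_sub_cancel]
  ring

/-- The antiderivative of `psi m x / x ^ 2`. -/
noncomputable def Fm (m : ℕ) (x : ℝ) : ℝ := psi (m - 1) x / ((m : ℝ) - 1) - psi m x / x

lemma hasDerivAt_Fm (m : ℕ) (hm : 2 ≤ m) {x : ℝ} (hx : 0 < x) :
    HasDerivAt (Fm m) (psi m x / x ^ 2) x := by
  have hm1 : 1 ≤ m - 1 := Nat.le_sub_one_of_lt hm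
  have h1 : HasDerivAt (fun y => psi (m - 1) y / ((m : ℝ) - 1))
      (x ^ (m - 2) * Real.exp (-x) / (m - 2).factorial / ((m : ℝ) - 1)) x := by
    have := (hasDerivAt_psi (m - 1) hm1 x).div_const ((m : ℝ) - 1)
    have he : m - 1 - 1 = m - 2 := by omega
    rwa [he] at this
  have h2 : HasDerivAt (fun y => psi m y / y)
      ((x ^ (m - 1) * Real.exp (-x) / (m - 1).factorial * x - psi m x) / x ^ 2) x := by
    have := (hasDerivAt_psi m (by omega) x).div (hasDerivAt_id x) (ne_of_gt hx)
    simpa [Pi.div_def] using this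
  refine HasDerivAt.congr_deriv (h1.sub h2) ?_
  have hfact : ((m - 1).factorial : ℝ) = ((m : ℝ) - 1) * (m - 2).factorial := by
    have : m - 1 = (m - 2) + 1 := by omega
    rw [this, Nat.factorial_succ]
    push_cast [Nat.cast_sub (by omega : 2 ≤ m)]
    ring
  have hpow : x ^ (m - 1) = x ^ (m - 2) * x := by
    rw [← pow_succ]; congr 1; omega
  have hm1pos : (0:ℝ) < (m:ℝ) - 1 := by
    have : (2:ℝ) ≤ (m:ℝ) := by exact_mod_cast hm
    linarith
  field_simp [hfact, hpow]
  rw [hfact, hpow]; ring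

lemma tendsto_psi_atTop (m : ℕ) : Tendsto (psi m) atTop (nhds 1) := by
  have h : Tendsto (fun x : ℝ => Real.exp (-x) * ∑ t ∈ Finset.range m, x ^ t / t.factorial)
      atTop (nhds 0) := by
    have : ∀ x : ℝ, Real.exp (-x) * ∑ t ∈ Finset.range m, x ^ t / t.factorial
        = ∑ t ∈ Finset.range m, (x ^ t * Real.exp (-x)) / t.factorial := by
      intro x; rw [Finset.mul_sum]; apply Finset.sum_congr rfl; intro t _; ring
    simp only [this]
    have h0 : Tendsto (fun x : ℝ => ∑ t ∈ Finset.range m, (x ^ t * Real.exp (-x)) / t.factorial)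
        atTop (nhds (∑ t ∈ Finset.range m, (0:ℝ))) := by
      apply tendsto_finset_sum
      intro t _
      simpa using (Real.tendsto_pow_mul_exp_neg_atTop_nhds_zero t).div_const (t.factorial : ℝ)
    simpa using h0
  have := (tendsto_const_nhds (x := (1:ℝ)) (f := atTop)).sub h
  rw [sub_zero] at this
  refine this.congr fun x => (psi_eq m x).symm

lemma tendsto_Fm_atTop (m : ℕ) : Tendsto (Fm m) atTop (nhds (1 / ((m : ℝ) - 1))) := by
  have h1 : Tendsto (fun x => psi (m - 1) x / ((m : ℝ) - 1)) atTop (nhds (1 / ((m : ℝ) - 1))) :=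
    (tendsto_psi_atTop (m - 1)).div_const _
  have h2 : Tendsto (fun x => psi m x / x) atTop (nhds 0) := by
    apply squeeze_zero' (t₀ := atTop)
    · filter_upwards [eventually_ge_atTop (0:ℝ)] with x hx
      rcases eq_or_lt_of_le hx with h | h
      · simp [← h]
      · exact div_nonneg (psi_nonneg m h.le) h.le
    · filter_upwards [eventually_gt_atTop (0:ℝ)] with x hx
      exact div_le_div_of_nonneg_right (psi_le_one m hx.le) hx.le
    · simpa [one_div] using tendsto_inv_atTop_zero
  have := h1.sub h2
  rw [sub_zero] at this
  exact this

lemma integrableOn_psi_div_sq (m : ℕ) {B : ℝ} (hB : 0 < B) :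
    IntegrableOn (fun x => psi m x / x ^ 2) (Set.Ioi B) := by
  have hmeas : AEStronglyMeasurable (fun x => psi m x / x ^ 2) (volume.restrict (Set.Ioi B)) :=
    (((psi_continuous m).measurable.div ((continuous_pow 2).measurable))).aestronglyMeasurable
  have hint : IntegrableOn (fun x : ℝ => x ^ (-2 : ℝ)) (Set.Ioi B) :=
    integrableOn_Ioi_rpow_of_lt (by norm_num) hB
  refine Integrable.mono' hint hmeas ?_
  filter_upwards [ae_restrict_mem measurableSet_Ioi] with x hx
  have hx0 : 0 < x := hB.trans hx
  have : |psi m x / x ^ 2| ≤ 1 / x ^ 2 := by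
    rw [abs_div, abs_of_nonneg (psi_nonneg m hx0.le), abs_of_nonneg (by positivity : (0:ℝ) ≤ x ^ 2)]
    apply div_le_div_of_nonneg_right (psi_le_one m hx0.le) (by positivity)
  refine this.trans (le_of_eq ?_)
  rw [Real.rpow_neg hx0.le, Real.rpow_two]
  simp [one_div]

lemma integral_psi_div_sq (m : ℕ) (hm : 2 ≤ m) {B : ℝ} (hB : 0 < B) :
    ∫ x in Set.Ioi B, psi m x / x ^ 2 = 1 / ((m:ℝ) - 1) - Fm m B :=
  integral_Ioi_of_hasDerivAt_of_tendsto'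
    (fun _ hx => hasDerivAt_Fm m hm (hB.trans_le hx))
    (integrableOn_psi_div_sq m hB) (tendsto_Fm_atTop m)

lemma Fm_zero (m : ℕ) (hm : 2 ≤ m) : Fm m 0 = 0 := by
  have h1 : psi (m - 1) 0 = 0 := by
    rw [psi_eq]
    have : ∑ t ∈ Finset.range (m - 1), (0:ℝ) ^ t / t.factorial = 1 := by
      rw [Finset.sum_eq_single 0]
      · simp
      · intro t _ ht; simp [zero_pow ht]
      · intro h; exact absurd (Finset.mem_range.mpr (by omega)) h
    simp [this]
  have h2 : psi m 0 = 0 := by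
    rw [psi_eq]
    have : ∑ t ∈ Finset.range m, (0:ℝ) ^ t / t.factorial = 1 := by
      rw [Finset.sum_eq_single 0]
      · simp
      · intro t _ ht; simp [zero_pow ht]
      · intro h; exact absurd (Finset.mem_range.mpr (by omega)) h
    simp [this]
  simp [Fm, h1, h2]

lemma continuousOn_Fm (m : ℕ) (hm : 2 ≤ m) : ContinuousOn (Fm m) (Set.Ici 0) := by
  intro x hx
  rcases eq_or_lt_of_le (Set.mem_Ici.mp hx) with h | h
  · -- x = 0
    subst h
    have h1 : ContinuousWithinAt (fun y => psi (m - 1) y / ((m:ℝ) - 1)) (Set.Ici 0) 0 :=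
      ((psi_continuous (m - 1)).continuousAt.div_const _).continuousWithinAt
    have h2 : ContinuousWithinAt (fun y => psi m y / y) (Set.Ici 0) 0 := by
      have hpz : psi m 0 / (0:ℝ) = 0 := by simp
      rw [ContinuousWithinAt, hpz]
      apply squeeze_zero' (t₀ := nhdsWithin 0 (Set.Ici 0))
        (f := fun y => psi m y / y) (g := fun y => y ^ (m - 1) / m.factorial)
      · filter_upwards [self_mem_nhdsWithin] with y (hy : (0:ℝ) ≤ y)
        rcases eq_or_lt_of_le hy with h | h
        · simp [← h]
        · exact div_nonneg (psi_nonneg m h.le) h.le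
      · filter_upwards [self_mem_nhdsWithin] with y (hy : (0:ℝ) ≤ y)
        rcases eq_or_lt_of_le hy with h | h
        · simp [← h]; positivity
        · have hy' : y ≠ 0 := ne_of_gt h
          have hpow : y ^ m / y = y ^ (m - 1) := by
            have : y ^ m = y ^ (m - 1) * y := by rw [← pow_succ]; congr 1; omega
            rw [this, mul_div_cancel_right₀ _ hy']
          calc psi m y / y ≤ (y ^ m / m.factorial) / y :=
                div_le_div_of_nonneg_right (psi_upper m h.le) h.le
            _ = y ^ (m - 1) / m.factorial := by rw [div_right_comm, hpow]
      · have : Tendsto (fun y : ℝ => y ^ (m - 1) / m.factorial) (nhdsWithin 0 (Set.Ici 0)) (nhds ((0:ℝ) ^ (m - 1) / m.factorial)) :=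
          ((continuous_pow (m - 1)).continuousAt.div_const _).continuousWithinAt
        simpa [zero_pow (by omega : m - 1 ≠ 0)] using this
    exact h1.sub h2
  · exact ((hasDerivAt_Fm m hm h).continuousAt).continuousWithinAt

lemma monotoneOn_Fm (m : ℕ) (hm : 2 ≤ m) : MonotoneOn (Fm m) (Set.Ici 0) := by
  apply monotoneOn_of_deriv_nonneg (convex_Ici 0) (continuousOn_Fm m hm)
  · intro x hx
    rw [interior_Ici] at hx
    exact (hasDerivAt_Fm m hm hx).differentiableAt.differentiableWithinAt
  · intro x hx
    rw [interior_Ici] at hx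
    rw [(hasDerivAt_Fm m hm hx).deriv]
    exact div_nonneg (psi_nonneg m hx.le) (by positivity)

lemma Fm_upper (m : ℕ) (hm : 2 ≤ m) {B : ℝ} (hB : 0 ≤ B) :
    Fm m B ≤ B ^ (m - 1) / (((m:ℝ) - 1) * m.factorial) := by
  set c : ℝ := ((m:ℝ) - 1) * m.factorial with hc
  have hm1 : (0:ℝ) < (m:ℝ) - 1 := by
    have : (2:ℝ) ≤ (m:ℝ) := by exact_mod_cast hm
    linarith
  have hcpos : 0 < c := by positivity
  set v : ℝ → ℝ := fun x => x ^ (m - 1) / c - Fm m x with hv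
  have hderiv : ∀ x : ℝ, 0 < x → HasDerivAt v (x ^ (m - 2) / m.factorial - psi m x / x ^ 2) x := by
    intro x hx
    have h1 : HasDerivAt (fun y : ℝ => y ^ (m - 1) / c) (((m:ℝ) - 1) * x ^ (m - 2) / c) x := by
      have := (hasDerivAt_pow (m - 1) x).div_const c
      have he : m - 1 - 1 = m - 2 := by omega
      rw [he] at this
      refine this.congr_deriv ?_
      rw [Nat.cast_sub (by omega : 1 ≤ m)]
      push_cast
      ring
    have := h1.sub (hasDerivAt_Fm m hm hx)
    refine this.congr_deriv ?_
    rw [hc]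
    field_simp
  have hmono : MonotoneOn v (Set.Ici 0) := by
    apply monotoneOn_of_deriv_nonneg (convex_Ici 0)
    · exact (ContinuousOn.div_const (continuous_pow (m-1)).continuousOn c).sub (continuousOn_Fm m hm)
    · intro x hx
      rw [interior_Ici] at hx
      exact (hderiv x hx).differentiableAt.differentiableWithinAt
    · intro x hx
      rw [interior_Ici] at hx
      rw [(hderiv x hx).deriv, sub_nonneg]
      have h1 : psi m x / x ^ 2 ≤ (x ^ m / m.factorial) / x ^ 2 :=
        div_le_div_of_nonneg_right (psi_upper m hx.le) (by positivity)
      refine h1.trans (le_of_eq ?_)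
      have : x ^ m = x ^ (m - 2) * x ^ 2 := by rw [← pow_add]; congr 1; omega
      rw [div_right_comm, this, mul_div_cancel_right₀ _ (pow_ne_zero 2 (ne_of_gt hx))]
  have h0 : v 0 = 0 := by
    simp [hv, Fm_zero m hm, zero_pow (by omega : m - 1 ≠ 0)]
  have := hmono (Set.self_mem_Ici) (Set.mem_Ici.mpr hB) hB
  rw [h0] at this
  simpa [hv, sub_nonneg] using this

lemma Fm_lower (m : ℕ) (hm : 2 ≤ m) {B : ℝ} (hB : 0 ≤ B) :
    Real.exp (-B) * B ^ (m - 1) / (((m:ℝ) - 1) * m.factorial) ≤ Fm m B := by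
  set c : ℝ := ((m:ℝ) - 1) * m.factorial with hc
  have hm1 : (0:ℝ) < (m:ℝ) - 1 := by
    have : (2:ℝ) ≤ (m:ℝ) := by exact_mod_cast hm
    linarith
  have hcpos : 0 < c := by positivity
  set u : ℝ → ℝ := fun x => Fm m x - Real.exp (-B) * x ^ (m - 1) / c with hu
  have hderiv : ∀ x : ℝ, 0 < x →
      HasDerivAt u (psi m x / x ^ 2 - Real.exp (-B) * x ^ (m - 2) / m.factorial) x := by
    intro x hx
    have h1 : HasDerivAt (fun y : ℝ => Real.exp (-B) * y ^ (m - 1) / c)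
        (Real.exp (-B) * (((m:ℝ) - 1) * x ^ (m - 2)) / c) x := by
      have := (((hasDerivAt_pow (m - 1) x)).const_mul (Real.exp (-B))).div_const c
      have he : m - 1 - 1 = m - 2 := by omega
      rw [he] at this
      refine this.congr_deriv ?_
      rw [Nat.cast_sub (by omega : 1 ≤ m)]
      push_cast
      ring
    have := (hasDerivAt_Fm m hm hx).sub h1
    refine this.congr_deriv ?_
    rw [hc]
    field_simp
  have hmono : MonotoneOn u (Set.Icc 0 B) := by
    apply monotoneOn_of_deriv_nonneg (convex_Icc 0 B)
    · exact ((continuousOn_Fm m hm).mono Set.Icc_subset_Ici_self).sub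
        ((continuous_const.mul (continuous_pow (m-1))).continuousOn.div_const c)
    · intro x hx
      rw [interior_Icc] at hx
      exact (hderiv x hx.1).differentiableAt.differentiableWithinAt
    · intro x hx
      rw [interior_Icc] at hx
      rw [(hderiv x hx.1).deriv, sub_nonneg]
      have h1 : (x ^ m * Real.exp (-x) / m.factorial) / x ^ 2 ≤ psi m x / x ^ 2 :=
        div_le_div_of_nonneg_right (psi_lower m hx.1.le) (by positivity)
      have hxm : x ^ m = x ^ (m - 2) * x ^ 2 := by rw [← pow_add]; congr 1; omega
      have hee : Real.exp (-B) ≤ Real.exp (-x) := Real.exp_le_exp.mpr (by linarith [hx.2])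
      have hx0 : x ≠ 0 := ne_of_gt hx.1
      have heq : (x ^ m * Real.exp (-x) / m.factorial) / x ^ 2
          = Real.exp (-x) * x ^ (m - 2) / m.factorial := by
        rw [hxm]; field_simp
      calc Real.exp (-B) * x ^ (m - 2) / m.factorial
          ≤ Real.exp (-x) * x ^ (m - 2) / m.factorial :=
            div_le_div_of_nonneg_right (mul_le_mul_of_nonneg_right hee (pow_nonneg hx.1.le _)) (by positivity)
        _ = (x ^ m * Real.exp (-x) / m.factorial) / x ^ 2 := heq.symm
        _ ≤ psi m x / x ^ 2 := h1
  have h0 : u 0 = 0 := by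
    simp [hu, Fm_zero m hm, zero_pow (by omega : m - 1 ≠ 0)]
  have := hmono (Set.left_mem_Icc.mpr hB) (Set.right_mem_Icc.mpr hB) hB
  rw [h0] at this
  simpa [hu, sub_nonneg] using this

theorem Ak_asymptotics (k : ℕ) (hk : 3 ≤ k) (A : ℝ → ℝ)
    (hA : ∀ c : ℝ, ((k : ℝ) - 2) / 2 < c →
      0 < A c ∧ A c = c * fk k (A c) ∧ ∀ B : ℝ, 0 < B → B = c * fk k B → B = A c) :
    Tendsto (fun ε : ℝ => A ((1 + ε) * (((k : ℝ) - 2) / 2)))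
      (nhdsWithin 0 (Set.Ioi 0)) (nhds 0) ∧
    Tendsto (fun ε : ℝ => A ((1 + ε) * (((k : ℝ) - 2) / 2)) /
        (((k - 1).factorial * ε) ^ ((1 : ℝ) / ((k : ℝ) - 2))))
      (nhdsWithin 0 (Set.Ioi 0)) (nhds 1) := by
  set m : ℕ := k - 1 with hmdef
  have hm : 2 ≤ m := by omega
  set κ : ℝ := (k : ℝ) - 2 with hκdef
  have hκ : 0 < κ := by
    have : (3:ℝ) ≤ (k:ℝ) := by exact_mod_cast hk
    simp only [hκdef]; linarith
  have hκ' : κ ≠ 0 := ne_of_gt hκ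
  have hmκ : ((m:ℝ) - 1) = κ := by
    have : ((m:ℕ):ℝ) = (k:ℝ) - 1 := by
      rw [hmdef, Nat.cast_sub (by omega : 1 ≤ k)]; norm_num
    rw [this, hκdef]; ring
  set M : ℝ := ((k - 1).factorial : ℝ) with hMdef
  have hM : 0 < M := by positivity
  have hMm : (m.factorial : ℝ) = M := by rw [hmdef]
  set a : ℝ → ℝ := fun ε => A ((1 + ε) * (κ / 2)) with hadef
  -- the key identity
  have hkey : ∀ ε : ℝ, 0 < ε → 0 < a ε ∧ Fm m (a ε) = ε / ((1 + ε) * κ) := by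
    intro ε hε
    set c : ℝ := (1 + ε) * (κ / 2) with hcdef
    have hc : κ / 2 < c := by
      rw [hcdef]; nlinarith
    obtain ⟨hapos, haeq, _⟩ := hA c hc
    refine ⟨hapos, ?_⟩
    have hint : fk k (a ε) = 2 * a ε * (1 / κ - Fm m (a ε)) := by
      rw [fk, ← hmdef, integral_psi_div_sq m hm hapos, hmκ]
    rw [hint] at haeq
    have hc0 : (0:ℝ) < c := lt_trans (by positivity) hc
    have h2 : 1 = c * (2 * (1 / κ - Fm m (a ε))) := by
      have := haeq
      have hne : a ε ≠ 0 := ne_of_gt hapos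
      field_simp at this ⊢
      nlinarith [this]
    rw [hcdef] at h2
    have h1ε : (0:ℝ) < 1 + ε := by linarith
    field_simp at h2 ⊢
    nlinarith [h2]
  -- part 1 : tendsto 0
  have part1 : Tendsto a (nhdsWithin 0 (Set.Ioi 0)) (nhds 0) := by
    rw [Metric.tendsto_nhdsWithin_nhds]
    intro δ hδ
    have hFδ : 0 < Fm m δ := by
      have hl := Fm_lower m hm (le_of_lt hδ)
      have : 0 < Real.exp (-δ) * δ ^ (m - 1) / (((m:ℝ) - 1) * m.factorial) := by
        rw [hmκ, hMm]; positivity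
      linarith
    refine ⟨κ * Fm m δ, by positivity, ?_⟩
    intro ε hε hdist
    have hε' : 0 < ε := hε
    obtain ⟨hapos, heq⟩ := hkey ε hε'
    have hεs : ε < κ * Fm m δ := by
      rw [Real.dist_eq, sub_zero, abs_of_pos hε'] at hdist; exact hdist
    have hFa : Fm m (a ε) < Fm m δ := by
      rw [heq]
      have h1ε : (1:ℝ) < 1 + ε := by linarith
      calc ε / ((1 + ε) * κ) < ε / κ := by
            apply div_lt_div_of_pos_left hε' hκ
            nlinarith
        _ < Fm m δ := by rw [div_lt_iff₀ hκ]; nlinarith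
    have : a ε < δ := by
      by_contra hcon
      push_neg at hcon
      exact absurd (monotoneOn_Fm m hm (Set.mem_Ici.mpr hδ.le) (Set.mem_Ici.mpr hapos.le) hcon)
        (not_le.mpr hFa)
    rw [Real.dist_eq, sub_zero, abs_of_pos hapos]
    exact this
  constructor
  · exact part1
  -- part 2
  · have hbounds : ∀ ε : ℝ, 0 < ε →
        1 / ((1 + ε) ^ ((1:ℝ)/κ)) ≤ a ε / ((M * ε) ^ ((1:ℝ)/κ)) ∧
        a ε / ((M * ε) ^ ((1:ℝ)/κ)) ≤ Real.exp (a ε / κ) / ((1 + ε) ^ ((1:ℝ)/κ)) := by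
      intro ε hε
      obtain ⟨hapos, heq⟩ := hkey ε hε
      have h1ε : (0:ℝ) < 1 + ε := by linarith
      have hup := Fm_upper m hm hapos.le
      have hlo := Fm_lower m hm hapos.le
      rw [heq, hmκ, hMm] at hup hlo
      have hup' : ε * (κ * M) ≤ a ε ^ (m-1) * ((1 + ε) * κ) := by
        rw [div_le_div_iff₀ (by positivity) (by positivity)] at hup; exact hup
      have hlo' : Real.exp (-(a ε)) * a ε ^ (m-1) * ((1 + ε) * κ) ≤ ε * (κ * M) := by
        rw [div_le_div_iff₀ (by positivity) (by positivity)] at hlo; exact hlo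
      have hb1 : M * ε / (1 + ε) ≤ a ε ^ (m - 1) := by
        rw [div_le_iff₀ h1ε]
        have h' : M * ε * κ ≤ a ε ^ (m-1) * (1 + ε) * κ := by
          calc M * ε * κ = ε * (κ * M) := by ring
            _ ≤ a ε ^ (m-1) * ((1 + ε) * κ) := hup'
            _ = a ε ^ (m-1) * (1 + ε) * κ := by ring
        exact le_of_mul_le_mul_right h' hκ
      have hb2 : a ε ^ (m - 1) ≤ Real.exp (a ε) * (M * ε) / (1 + ε) := by
        rw [le_div_iff₀ h1ε]
        have h1 : Real.exp (-(a ε)) * a ε ^ (m-1) * (1 + ε) ≤ ε * M := by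
          have h' : Real.exp (-(a ε)) * a ε ^ (m-1) * (1 + ε) * κ ≤ ε * M * κ := by
            calc Real.exp (-(a ε)) * a ε ^ (m-1) * (1 + ε) * κ
                = Real.exp (-(a ε)) * a ε ^ (m-1) * ((1 + ε) * κ) := by ring
              _ ≤ ε * (κ * M) := hlo'
              _ = ε * M * κ := by ring
          exact le_of_mul_le_mul_right h' hκ
        have h2 := mul_le_mul_of_nonneg_left h1 (Real.exp_pos (a ε)).le
        have hid : Real.exp (a ε) * Real.exp (-(a ε)) = 1 := by
          rw [← Real.exp_add]; simp
        calc a ε ^ (m-1) * (1 + ε)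
            = Real.exp (a ε) * Real.exp (-(a ε)) * a ε ^ (m-1) * (1 + ε) := by rw [hid]; ring
          _ = Real.exp (a ε) * (Real.exp (-(a ε)) * a ε ^ (m-1) * (1 + ε)) := by ring
          _ ≤ Real.exp (a ε) * (ε * M) := h2
          _ = Real.exp (a ε) * (M * ε) := by ring
      -- rpow conversion
      have hmn : ((m - 1 : ℕ) : ℝ) = κ := by
        rw [Nat.cast_sub (by omega : 1 ≤ m), hmκ.symm]; norm_num
      have hanat : a ε ^ (m - 1) = a ε ^ (κ : ℝ) := by
        rw [← Real.rpow_natCast (a ε) (m-1), hmn]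
      have haκ : (a ε ^ (κ:ℝ)) ^ ((1:ℝ)/κ) = a ε := by
        rw [← Real.rpow_mul hapos.le, mul_one_div, div_self hκ', Real.rpow_one]
      have hMε : (0:ℝ) < M * ε := by positivity
      constructor
      · -- lower
        have hthis := Real.rpow_le_rpow (by positivity) hb1 (by positivity : (0:ℝ) ≤ 1/κ)
        rw [hanat, haκ, Real.div_rpow (le_of_lt hMε) h1ε.le] at hthis
        rw [div_le_div_iff₀ (by positivity) (by positivity : (0:ℝ) < (M*ε) ^ ((1:ℝ)/κ)), one_mul]
        rw [div_le_iff₀ (by positivity : (0:ℝ) < (1+ε) ^ ((1:ℝ)/κ))] at hthis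
        exact hthis
      · -- upper
        have h3 := Real.rpow_le_rpow (by positivity) hb2 (by positivity : (0:ℝ) ≤ 1/κ)
        rw [hanat, haκ, Real.div_rpow (by positivity) h1ε.le,
          Real.mul_rpow (le_of_lt (Real.exp_pos _)) hMε.le, ← Real.exp_mul, mul_one_div] at h3
        rw [div_le_div_iff₀ (by positivity : (0:ℝ) < (M*ε) ^ ((1:ℝ)/κ))
          (by positivity : (0:ℝ) < (1+ε) ^ ((1:ℝ)/κ))]
        rw [le_div_iff₀ (by positivity : (0:ℝ) < (1+ε) ^ ((1:ℝ)/κ))] at h3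
        exact h3
    -- limits of bounding functions
    have hq : Tendsto (fun ε : ℝ => (1 + ε) ^ ((1:ℝ)/κ)) (nhdsWithin 0 (Set.Ioi 0)) (nhds 1) := by
      have c1 : ContinuousAt (fun ε : ℝ => (1 + ε) ^ ((1:ℝ)/κ)) 0 := by
        apply ContinuousAt.comp (x := (0:ℝ)) (g := fun y : ℝ => y ^ ((1:ℝ)/κ))
        · simpa using Real.continuousAt_rpow_const 1 ((1:ℝ)/κ) (Or.inl one_ne_zero)
        · fun_prop
      have h2 := c1.tendsto.mono_left (nhdsWithin_le_nhds (s := Set.Ioi 0))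
      simpa [Real.one_rpow] using h2
    have hlow : Tendsto (fun ε : ℝ => 1 / ((1 + ε) ^ ((1:ℝ)/κ))) (nhdsWithin 0 (Set.Ioi 0)) (nhds 1) := by
      have h2 := (tendsto_const_nhds (x := (1:ℝ)) (f := nhdsWithin (0:ℝ) (Set.Ioi 0))).div hq one_ne_zero
      simpa [Pi.div_def, one_div] using h2
    have hhigh : Tendsto (fun ε : ℝ => Real.exp (a ε / κ) / ((1 + ε) ^ ((1:ℝ)/κ)))
        (nhdsWithin 0 (Set.Ioi 0)) (nhds 1) := by
      have hexp : Tendsto (fun ε : ℝ => Real.exp (a ε / κ)) (nhdsWithin 0 (Set.Ioi 0)) (nhds 1) := by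
        have h1 : Tendsto (fun ε : ℝ => a ε / κ) (nhdsWithin 0 (Set.Ioi 0)) (nhds 0) := by
          simpa using part1.div_const κ
        have := (Real.continuous_exp.tendsto 0).comp h1
        simpa [Function.comp_def] using this
      have := hexp.div hq one_ne_zero
      simpa [Pi.div_def] using this
    refine tendsto_of_tendsto_of_tendsto_of_le_of_le' hlow hhigh ?_ ?_
    · filter_upwards [self_mem_nhdsWithin] with ε (hε : ε ∈ Set.Ioi 0)
      exact (hbounds ε hε).1
    · filter_upwards [self_mem_nhdsWithin] with ε (hε : ε ∈ Set.Ioi 0)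
      exact (hbounds ε hε).2
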